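/- Let 𝒜 be an associative supercommutative superalgebra over a field 𝕂 of characteristic zero and δ an even derivation of 𝒜. Then the bracket [u,v]_δ = u·δ(v) − (−1)^{|u||v|} v·δ(u) satisfies the graded Jacobi identity: for all homogeneous u, v, w ∈ 𝒜, [w,[u,v]_δ]_δ = [[w,u]_δ, v]_δ + (−1)^{|u||w|} [u,[w,v]_δ]_δ. -/

import Mathlib

/-- The sign `(-1)^{ij}` in a field `K`, for parities `i j : ZMod 2`. -/
def sg (K : Type*) [Field K] (i j : ZMod 2) : K := (-1) ^ (i.val * j.val)

/-- The bracket `[u,v]_δ = u·δ(v) − s·(v·δ(u))`, where `s` is the relevant sign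
`(-1)^{|u||v|}`. -/
def tpb {K A : Type*} [Field K] [Ring A] [Algebra K A]
    (δ : A → A) (s : K) (u v : A) : A :=
  u * δ v - s • (v * δ u)

/-- for an associative supercommutative superalgebra `A` over a field `K`
of characteristic zero, with grading `𝒜 : ZMod 2 → Submodule K A`, and an even
derivation `δ`, the bracket `[u,v]_δ = u·δ(v) − (−1)^{|u||v|} v·δ(u)` satisfies the
graded Jacobi identity
`[w,[u,v]_δ]_δ = [[w,u]_δ,v]_δ + (−1)^{|u||w|}[u,[w,v]_δ]_δ`
for homogeneous `u, v, w` of parities `i, j, k` respectively. -/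
theorem bracket_graded_jacobi
    {K A : Type*} [Field K] [CharZero K] [Ring A] [Algebra K A]
    (𝒜 : ZMod 2 → Submodule K A) [GradedAlgebra 𝒜]
    (hcomm : ∀ (i j : ZMod 2) (u v : A), u ∈ 𝒜 i → v ∈ 𝒜 j →
      u * v = sg K i j • (v * u))
    (δ : A →ₗ[K] A)
    (hδeven : ∀ (i : ZMod 2) (u : A), u ∈ 𝒜 i → δ u ∈ 𝒜 i)
    (hδder : ∀ u v : A, δ (u * v) = δ u * v + u * δ v)
    (i j k : ZMod 2) (u v w : A) (hu : u ∈ 𝒜 i) (hv : v ∈ 𝒜 j) (hw : w ∈ 𝒜 k) :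
    tpb δ (sg K k (i + j)) w (tpb δ (sg K i j) u v) =
      tpb δ (sg K (k + i) j) (tpb δ (sg K k i) w u) v +
        sg K i k • tpb δ (sg K i (k + j)) u (tpb δ (sg K k j) w v) := by
  have hdu : δ u ∈ 𝒜 i := hδeven i u hu
  have hdv : δ v ∈ 𝒜 j := hδeven j v hv
  have hdw : δ w ∈ 𝒜 k := hδeven k w hw
  have hddu : δ (δ u) ∈ 𝒜 i := hδeven i _ hdu
  have hddv : δ (δ v) ∈ 𝒜 j := hδeven j _ hdv
  have hddw : δ (δ w) ∈ 𝒜 k := hδeven k _ hdw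
  have sw : ∀ (p q : ZMod 2) (x y : A), x ∈ 𝒜 p → y ∈ 𝒜 q → ∀ z : A,
      x * (y * z) = sg K p q • (y * (x * z)) := by
    intro p q x y hx hy z
    rw [← mul_assoc, hcomm p q x y hx hy, smul_mul_assoc, mul_assoc]
  have swr : ∀ (p q : ZMod 2) (x y : A), x ∈ 𝒜 p → y ∈ 𝒜 q → ∀ z : A,
      z * (x * y) = sg K p q • (z * (y * x)) := by
    intro p q x y hx hy z
    rw [hcomm p q x y hx hy, mul_smul_comm]
  have hA : w * (δ u * δ v) = sg K k i • (sg K k j • (δ u * (δ v * w))) := by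
    rw [sw k i w (δ u) hw hdu (δ v), swr k j w (δ v) hw hdv (δ u)]
  have hB : w * (u * δ (δ v)) = sg K k i • (sg K k j • (u * (δ (δ v) * w))) := by
    rw [sw k i w u hw hu (δ (δ v)), swr k j w (δ (δ v)) hw hddv u]
  have hC : w * (δ v * δ u) = sg K k j • (sg K k i • (sg K j i • (δ u * (δ v * w)))) := by
    rw [sw k j w (δ v) hw hdv (δ u), swr k i w (δ u) hw hdu (δ v),
        sw j i (δ v) (δ u) hdv hdu w]
  have hD : w * (v * δ (δ u)) = sg K k j • (sg K k i • (sg K j i • (δ (δ u) * (v * w)))) := by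
    rw [sw k j w v hw hv (δ (δ u)), swr k i w (δ (δ u)) hw hddu v,
        sw j i v (δ (δ u)) hv hddu w]
  have hF : v * (δ u * δ w) = sg K j i • (δ u * (v * δ w)) := by
    rw [sw j i v (δ u) hv hdu (δ w)]
  have hG : u * (δ w * δ v) = sg K k j • (u * (δ v * δ w)) := by
    rw [swr k j (δ w) (δ v) hdw hdv u]
  have hH : v * (δ w * δ u) = sg K k i • (sg K j i • (δ u * (v * δ w))) := by
    rw [swr k i (δ w) (δ u) hdw hdu v, sw j i v (δ u) hv hdu (δ w)]
  have hI : v * (w * δ (δ u)) = sg K k i • (sg K j i • (δ (δ u) * (v * w))) := by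
    rw [swr k i w (δ (δ u)) hw hddu v, sw j i v (δ (δ u)) hv hddu w]
  have hJ : v * (u * δ (δ w)) = sg K j i • (u * (v * δ (δ w))) := by
    rw [sw j i v u hv hu (δ (δ w))]
  have hK : u * (w * δ (δ v)) = sg K k j • (u * (δ (δ v) * w)) := by
    rw [swr k j w (δ (δ v)) hw hddv u]
  simp only [tpb, map_sub, map_smul, hδder, sub_mul, mul_sub, smul_sub,
    smul_mul_assoc, mul_smul_comm, mul_add, add_mul, smul_add, mul_assoc]
  simp only [hA, hB, hC, hD, hF, hG, hH, hI, hJ, hK, smul_smul]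
  fin_cases i <;> fin_cases j <;> fin_cases k <;>
    simp only [Fin.mk_zero, Fin.mk_one, Fin.isValue, sg, show ((1 : ZMod 2) + 1) = 0 by decide,
      show ((0 : ZMod 2) + 1) = 1 by decide, show ((1 : ZMod 2) + 0) = 1 by decide,
      show ((0 : ZMod 2) + 0) = 0 by decide, show ZMod.val (0 : ZMod 2) = 0 by decide,
      show ZMod.val (1 : ZMod 2) = 1 by decide] <;>
    norm_num +decide [ZMod.val] <;> module
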